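/- For integers p, q with q > 0 and gcd(p,q) = 1, the Dedekind sum satisfies the reciprocity law s(p,q) + s(q,p) = (1/12)(p/q + q/p + 1/(pq)) - 1/4, where s(p,q) = \sum_{k=0}^{q-1} ((k/q))((pk/q)) and ((x)) denotes the sawtooth function. -/

import Mathlib

/-- The sawtooth function `((x))`: `x - ⌊x⌋ - 1/2` for non-integer `x`, and `0` for integer `x`. -/
noncomputable def sawtooth (x : ℝ) : ℝ :=
  if Int.fract x = 0 then 0 else Int.fract x - 1/2

/-- The classical Dedekind sum `s(p,q) = ∑_{k=0}^{q-1} ((k/q)) ((pk/q))`. -/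
noncomputable def dedekindSum (p q : ℕ) : ℝ :=
  ∑ k ∈ Finset.range q, sawtooth (k / q) * sawtooth (p * k / q)

open Finset

-- Gauss sums
lemma dr_sum_id (n : ℕ) : 2 * ∑ k ∈ Finset.range n, (k:ℤ) = n*(n-1) := by
  induction n with
  | zero => simp
  | succ n ih => rw [Finset.sum_range_succ]; push_cast; push_cast at ih; ring_nf; ring_nf at ih; omega

lemma dr_sum_sq (n : ℕ) : 6 * ∑ k ∈ Finset.range n, (k:ℤ)^2 = n*(n-1)*(2*n-1) := by
  induction n with
  | zero => simp
  | succ n ih =>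
    rw [Finset.sum_range_succ]
    push_cast at ih ⊢
    nlinarith [ih]

lemma dr_Ico_of_zero (g : ℕ → ℤ) (hg : g 0 = 0) (n : ℕ) :
    ∑ k ∈ Finset.Ico 1 n, g k = ∑ k ∈ Finset.range n, g k := by
  rcases Nat.eq_zero_or_pos n with h | h
  · subst h; simp
  · rw [Finset.range_eq_Ico, Finset.sum_eq_sum_Ico_succ_bot h, hg, zero_add]

lemma dr_bij (p q : ℕ) (hq : 0 < q) (hpq : Nat.Coprime p q) (f : ℕ → ℤ) :
    ∑ k ∈ Finset.range q, f (p * k % q) = ∑ k ∈ Finset.range q, f k := by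
  rcases eq_or_lt_of_le (show 1 ≤ q from hq) with h1 | h1
  · simp [← h1]
  obtain ⟨p', -, hp'⟩ := Nat.exists_mul_mod_eq_one_of_coprime hpq h1
  have key : ∀ a b : ℕ, a * b % q = 1 % q → ∀ x < q, a * (b * x % q) % q = x := by
    intro a b hab x hx
    calc a * (b * x % q) % q = (a * (b * x)) % q := by
          rw [Nat.mul_mod, Nat.mod_mod_of_dvd _ dvd_rfl, ← Nat.mul_mod]
      _ = ((a * b) % q) * (x % q) % q := by rw [← mul_assoc, Nat.mul_mod]
      _ = x := by rw [hab, ← Nat.mul_mod, one_mul, Nat.mod_eq_of_lt hx]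
  refine Finset.sum_nbij' (fun k => p * k % q) (fun k => p' * k % q) ?_ ?_ ?_ ?_ ?_
  · intro a ha; exact Finset.mem_range.2 (Nat.mod_lt _ hq)
  · intro a ha; exact Finset.mem_range.2 (Nat.mod_lt _ hq)
  · intro a ha
    exact key p' p (by rw [mul_comm]; rw [hp']; exact (Nat.mod_eq_of_lt h1).symm)
      a (Finset.mem_range.1 ha)
  · intro a ha
    exact key p p' (by rw [hp']; exact (Nat.mod_eq_of_lt h1).symm) a (Finset.mem_range.1 ha)
  · intro a ha; rfl

lemma dr_ne (p q : ℕ) (hpq : Nat.Coprime p q) {k : ℕ} (hk1 : 1 ≤ k) (hk2 : k < q)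
    (j : ℕ) : q * j ≠ p * k := by
  intro h
  have hdvd : q ∣ k * p := ⟨j, by rw [mul_comm k p, ← h]⟩
  have : q ∣ k := Nat.Coprime.dvd_of_dvd_mul_right hpq.symm hdvd
  have := Nat.le_of_dvd (by omega) this
  omega

lemma dr_mod_ne (p q : ℕ) (hpq : Nat.Coprime p q) {k : ℕ} (hk1 : 1 ≤ k) (hk2 : k < q) :
    p * k % q ≠ 0 := by
  intro h
  have hdvd : q ∣ k * p := by rw [mul_comm]; exact Nat.dvd_of_mod_eq_zero h
  have : q ∣ k := Nat.Coprime.dvd_of_dvd_mul_right hpq.symm hdvd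
  have := Nat.le_of_dvd (by omega) this
  omega

lemma dr_m_lt (p q : ℕ) (hp : 0 < p) {k : ℕ} (hk2 : k < q) : p * k / q < p := by
  refine Nat.div_lt_of_lt_mul ?_
  have h1 : p * k ≤ p * (q-1) := Nat.mul_le_mul_left p (by omega)
  have h2 : p * ((q-1)+1) = p * (q-1) + p := Nat.mul_succ p (q-1)
  have h3 : q - 1 + 1 = q := by omega
  rw [h3] at h2
  have h4 : q * p = p * q := mul_comm q p
  omega

lemma dr_filter_lt (p q : ℕ) (hp : 0 < p) (hq : 0 < q) (hpq : Nat.Coprime p q)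
    {k : ℕ} (hk1 : 1 ≤ k) (hk2 : k < q) :
    (Finset.Ico 1 p).filter (fun j => q * j < p * k) = Finset.Ico 1 (p * k / q + 1) := by
  ext j
  simp only [Finset.mem_filter, Finset.mem_Ico]
  have hcm : j * q = q * j := mul_comm _ _
  constructor
  · rintro ⟨⟨h1, h2⟩, h3⟩
    refine ⟨h1, ?_⟩
    have : j ≤ p * k / q := (Nat.le_div_iff_mul_le hq).2 (by omega)
    omega
  · rintro ⟨h1, h2⟩
    have hj : j ≤ p * k / q := by omega
    have h3 : j * q ≤ p * k := (Nat.le_div_iff_mul_le hq).1 hj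
    have h4 : q * j ≠ p * k := dr_ne p q hpq hk1 hk2 j
    have h5 : p * k / q < p := dr_m_lt p q hp hk2
    exact ⟨⟨h1, by omega⟩, by omega⟩

lemma dr_filter_gt (p q : ℕ) (hp : 0 < p) (hq : 0 < q) (hpq : Nat.Coprime p q)
    {k : ℕ} (hk1 : 1 ≤ k) (hk2 : k < q) :
    (Finset.Ico 1 p).filter (fun j => p * k < q * j) = Finset.Ico (p * k / q + 1) p := by
  have hmod := Nat.div_add_mod (p * k) q
  have hlt : p * k % q < q := Nat.mod_lt _ hq
  generalize hgm : p * k / q = m at *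
  generalize hgr : p * k % q = r at *
  ext j
  simp only [Finset.mem_filter, Finset.mem_Ico]
  constructor
  · rintro ⟨⟨h1, h2⟩, h3⟩
    refine ⟨?_, h2⟩
    by_contra hc
    have hj : j ≤ m := by omega
    have : q * j ≤ q * m := Nat.mul_le_mul_left q hj
    omega
  · rintro ⟨h1, h2⟩
    have h3 : q * m + q ≤ q * j := by
      have := Nat.mul_le_mul_left q h1
      rwa [Nat.mul_succ] at this
    exact ⟨⟨by omega, h2⟩, by omega⟩

noncomputable def drS1 (p q : ℕ) : ℤ := ∑ k ∈ Finset.Ico 1 q, (k : ℤ) * ((p * k / q : ℕ) : ℤ)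
noncomputable def drM2 (p q : ℕ) : ℤ := ∑ k ∈ Finset.Ico 1 q, ((p * k / q : ℕ) : ℤ)^2
noncomputable def drSm (p q : ℕ) : ℤ := ∑ k ∈ Finset.Ico 1 q, ((p * k / q : ℕ) : ℤ)
noncomputable def drT (p q : ℕ) : ℤ := ∑ k ∈ Finset.Ico 1 q, (k : ℤ) * ((p * k % q : ℕ) : ℤ)

lemma dr_cast_dm (p q k : ℕ) :
    ((p : ℤ) * k) = q * ((p * k / q : ℕ) : ℤ) + ((p * k % q : ℕ) : ℤ) := by
  exact_mod_cast congrArg (fun n : ℕ => (n : ℤ)) (Nat.div_add_mod (p * k) q).symm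

lemma dr_sum_id' (n : ℕ) : 2 * ∑ k ∈ Finset.Ico 1 n, (k:ℤ) = n*(n-1) := by
  rw [dr_Ico_of_zero _ (by simp)]; exact dr_sum_id n

lemma dr_sum_sq' (n : ℕ) : 6 * ∑ k ∈ Finset.Ico 1 n, (k:ℤ)^2 = n*(n-1)*(2*n-1) := by
  rw [dr_Ico_of_zero _ (by simp)]; exact dr_sum_sq n

lemma dr_sum_r (p q : ℕ) (hq : 0 < q) (hpq : Nat.Coprime p q) :
    ∑ k ∈ Finset.Ico 1 q, ((p * k % q : ℕ) : ℤ) = ∑ k ∈ Finset.Ico 1 q, (k:ℤ) := by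
  rw [dr_Ico_of_zero (fun k => ((p * k % q : ℕ) : ℤ)) (by simp), dr_Ico_of_zero _ (by simp)]
  exact dr_bij p q hq hpq (fun x => (x : ℤ))

lemma dr_sum_r2 (p q : ℕ) (hq : 0 < q) (hpq : Nat.Coprime p q) :
    ∑ k ∈ Finset.Ico 1 q, ((p * k % q : ℕ) : ℤ)^2 = ∑ k ∈ Finset.Ico 1 q, (k:ℤ)^2 := by
  rw [dr_Ico_of_zero (fun k => ((p * k % q : ℕ) : ℤ)^2) (by simp), dr_Ico_of_zero _ (by simp)]
  exact dr_bij p q hq hpq (fun x => (x : ℤ)^2)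

lemma dr_e3 (p q : ℕ) (hq : 0 < q) (hpq : Nat.Coprime p q) :
    (q : ℤ) * drSm p q = ((p : ℤ) - 1) * ∑ k ∈ Finset.Ico 1 q, (k:ℤ) := by
  have h : (q : ℤ) * drSm p q + ∑ k ∈ Finset.Ico 1 q, ((p * k % q : ℕ) : ℤ)
      = (p : ℤ) * ∑ k ∈ Finset.Ico 1 q, (k:ℤ) := by
    rw [drSm, Finset.mul_sum, Finset.mul_sum, ← Finset.sum_add_distrib]
    refine Finset.sum_congr rfl fun k hk => ?_
    linear_combination (dr_cast_dm p q k).symm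
  rw [dr_sum_r p q hq hpq] at h
  linarith [h]

lemma dr_e4 (p q : ℕ) (hq : 0 < q) (hpq : Nat.Coprime p q) :
    (p : ℤ)^2 * (∑ k ∈ Finset.Ico 1 q, (k:ℤ)^2) + (q : ℤ)^2 * drM2 p q
      = 2 * p * q * drS1 p q + ∑ k ∈ Finset.Ico 1 q, (k:ℤ)^2 := by
  have h : (p : ℤ)^2 * (∑ k ∈ Finset.Ico 1 q, (k:ℤ)^2) + (q : ℤ)^2 * drM2 p q
      = 2 * p * q * drS1 p q + ∑ k ∈ Finset.Ico 1 q, ((p * k % q : ℕ) : ℤ)^2 := by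
    rw [drM2, drS1, Finset.mul_sum, Finset.mul_sum, Finset.mul_sum,
      ← Finset.sum_add_distrib, ← Finset.sum_add_distrib]
    refine Finset.sum_congr rfl fun k hk => ?_
    have h := dr_cast_dm p q k
    linear_combination ((p:ℤ) * k - q * ((p * k / q : ℕ) : ℤ) + ((p * k % q : ℕ) : ℤ)) * h
  rw [dr_sum_r2 p q hq hpq] at h
  exact h

lemma dr_L2 (p q : ℕ) (hp : 0 < p) (hq : 0 < q) (hpq : Nat.Coprime p q) :
    (p:ℤ) * drS1 p q + (q:ℤ) * drS1 q p =
      ∑ k ∈ Finset.Ico 1 q, ((p:ℤ) * k * ((p * k / q : ℕ) : ℤ)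
        + (q:ℤ) * ((∑ j ∈ Finset.range p, (j:ℤ))
            - ∑ j ∈ Finset.range (p * k / q + 1), (j:ℤ))) := by
  have step2 : (q:ℤ) * drS1 q p =
      ∑ k ∈ Finset.Ico 1 q, ∑ j ∈ Finset.Ico 1 p,
        (if p * k < q * j then (q:ℤ) * j else 0) := by
    rw [drS1, Finset.mul_sum, Finset.sum_comm]
    refine Finset.sum_congr rfl fun j hj => ?_
    rw [mem_Ico] at hj
    rw [← Finset.sum_filter, dr_filter_lt q p hq hp hpq.symm hj.1 hj.2, Finset.sum_const,
      Nat.card_Ico]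
    simp only [nsmul_eq_mul, Nat.add_sub_cancel]
    ring
  have inner2 : ∀ k ∈ Finset.Ico 1 q,
      ∑ j ∈ Finset.Ico 1 p, (if p * k < q * j then (q:ℤ) * j else 0)
        = (q:ℤ) * ((∑ j ∈ Finset.range p, (j:ℤ))
            - ∑ j ∈ Finset.range (p * k / q + 1), (j:ℤ)) := by
    intro k hk
    rw [mem_Ico] at hk
    rw [← Finset.sum_filter, dr_filter_gt p q hp hq hpq hk.1 hk.2,
      Finset.sum_Ico_eq_sub _ (Nat.succ_le_of_lt (dr_m_lt p q hp hk.2)),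
      mul_sub, Finset.mul_sum, Finset.mul_sum]
  rw [step2, drS1, Finset.mul_sum, ← Finset.sum_add_distrib]
  refine Finset.sum_congr rfl fun k hk => ?_
  rw [inner2 k hk]
  ring

lemma dr_e5 (p q : ℕ) (hp : 0 < p) (hq : 0 < q) (hpq : Nat.Coprime p q) :
    2 * ((p:ℤ) * drS1 p q + (q:ℤ) * drS1 q p) =
      2 * p * drS1 p q + ((q:ℤ) - 1) * ((q:ℤ) * p * ((p:ℤ) - 1))
        - (q:ℤ) * (drM2 p q + drSm p q) := by
  have h2 : 2 * ((p:ℤ) * drS1 p q + (q:ℤ) * drS1 q p)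
      = ∑ k ∈ Finset.Ico 1 q, (2 * (p:ℤ) * k * ((p * k / q : ℕ) : ℤ)
          + (q:ℤ) * ((p:ℤ) * ((p:ℤ) - 1))
          - (q:ℤ) * (((p * k / q : ℕ) : ℤ)^2 + ((p * k / q : ℕ) : ℤ))) := by
    rw [dr_L2 p q hp hq hpq, Finset.mul_sum]
    refine Finset.sum_congr rfl fun k hk => ?_
    have ha := dr_sum_id p
    have hb := dr_sum_id (p * k / q + 1)
    rw [Nat.cast_add, Nat.cast_one] at hb
    linear_combination (q : ℤ) * ha - (q : ℤ) * hb
  rw [h2, Finset.sum_sub_distrib, Finset.sum_add_distrib, Finset.sum_const, Nat.card_Ico]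
  have hc : ((q - 1 : ℕ) : ℤ) = (q : ℤ) - 1 := by
    have : (1:ℕ) ≤ q := hq; push_cast [this]; ring
  have hS1 : ∑ k ∈ Finset.Ico 1 q, (2 * (p:ℤ) * k * ((p * k / q : ℕ) : ℤ))
      = 2 * p * drS1 p q := by
    rw [drS1, Finset.mul_sum]; refine Finset.sum_congr rfl fun k hk => by ring
  have hMC : ∑ k ∈ Finset.Ico 1 q, ((q:ℤ) * (((p * k / q : ℕ) : ℤ)^2 + ((p * k / q : ℕ) : ℤ)))
      = (q:ℤ) * (drM2 p q + drSm p q) := by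
    rw [drM2, drSm, mul_add, Finset.mul_sum, Finset.mul_sum, ← Finset.sum_add_distrib]
    refine Finset.sum_congr rfl fun k hk => by ring
  rw [hS1, hMC, nsmul_eq_mul, hc]
  ring

lemma dr_key (p q : ℕ) (hp : 0 < p) (hq : 0 < q) (hpq : Nat.Coprime p q) :
    12 * ((p:ℤ) * drS1 p q + (q:ℤ) * drS1 q p) =
      ((p:ℤ) - 1) * ((q:ℤ) - 1) * (8 * p * q - p - q - 1) := by
  have hqz : (q : ℤ) ≠ 0 := by exact_mod_cast hq.ne'
  apply mul_left_cancel₀ hqz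
  have he1 := dr_sum_id' q
  have he2 := dr_sum_sq' q
  have he3 := dr_e3 p q hq hpq
  have he4 := dr_e4 p q hq hpq
  have he5 := dr_e5 p q hp hq hpq
  linear_combination (-3 * (q:ℤ) * ((p:ℤ) - 1)) * he1 + ((p:ℤ)^2 - 1) * he2
    + (-6 * (q:ℤ)) * he3 + (-6 : ℤ) * he4 + (6 * (q:ℤ)) * he5

lemma dr_ded (p q : ℕ) (hp : 0 < p) (hq : 0 < q) (hpq : Nat.Coprime p q) :
    dedekindSum p q = ((drT p q : ℤ) : ℝ) / (q:ℝ)^2 - ((q:ℝ) - 1)/4 := by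
  have hq0 : (q : ℝ) ≠ 0 := by exact_mod_cast hq.ne'
  have step1 : dedekindSum p q = ∑ k ∈ Finset.Ico 1 q,
      (((k:ℝ)/q - 1/2) * (((p * k % q : ℕ) : ℝ)/q - 1/2)) := by
    rw [dedekindSum, Finset.range_eq_Ico, Finset.sum_eq_sum_Ico_succ_bot hq]
    have h0 : sawtooth ((0:ℕ) / (q:ℝ)) * sawtooth ((p:ℝ) * (0:ℕ) / q) = 0 := by
      simp [sawtooth]
    rw [h0, zero_add]
    refine Finset.sum_congr rfl fun k hk => ?_
    rw [mem_Ico] at hk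
    have hkpos : (0:ℝ) < (k:ℝ) := by exact_mod_cast hk.1
    have hklt : (k:ℝ) < q := by exact_mod_cast hk.2
    have hfa : Int.fract ((k:ℝ)/q) = (k:ℝ)/q :=
      Int.fract_eq_self.mpr ⟨by positivity, by rw [div_lt_one (by positivity)]; exact hklt⟩
    have hne : (k:ℝ)/q ≠ 0 := by positivity
    have hcast : (p:ℝ) * (k:ℝ) / q = ((p * k : ℕ) : ℝ) / ((q:ℕ):ℝ) := by push_cast; ring
    have hfb : Int.fract ((p:ℝ) * (k:ℝ) / q) = ((p * k % q : ℕ) : ℝ) / q := by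
      rw [hcast, Int.fract_div_natCast_eq_div_natCast_mod]
    have hrne : ((p * k % q : ℕ) : ℝ) / q ≠ 0 := by
      apply div_ne_zero _ hq0
      exact_mod_cast dr_mod_ne p q hpq hk.1 hk.2
    rw [sawtooth, sawtooth, hfa, hfb, if_neg hne, if_neg hrne]
  have expand : ∀ k ∈ Finset.Ico 1 q,
      ((k:ℝ)/q - 1/2) * (((p * k % q : ℕ) : ℝ)/q - 1/2)
        = (k:ℝ) * ((p * k % q : ℕ) : ℝ) / (q:ℝ)^2 - (k:ℝ)/(2*q)
            - ((p * k % q : ℕ) : ℝ)/(2*q) + 1/4 := by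
    intro k _
    field_simp
    ring
  rw [step1, Finset.sum_congr rfl expand, Finset.sum_add_distrib, Finset.sum_sub_distrib,
    Finset.sum_sub_distrib, ← Finset.sum_div, ← Finset.sum_div, ← Finset.sum_div,
    Finset.sum_const, Nat.card_Ico]
  have hT : ∑ k ∈ Finset.Ico 1 q, (k:ℝ) * ((p * k % q : ℕ) : ℝ) = ((drT p q : ℤ) : ℝ) := by
    rw [drT]
    push_cast
    rfl
  have hr : ∑ k ∈ Finset.Ico 1 q, ((p * k % q : ℕ) : ℝ) = ∑ k ∈ Finset.Ico 1 q, (k:ℝ) := by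
    have h := congrArg (fun z : ℤ => (z : ℝ)) (dr_sum_r p q hq hpq)
    push_cast at h
    exact h
  have hK : 2 * ∑ k ∈ Finset.Ico 1 q, (k:ℝ) = (q:ℝ) * ((q:ℝ)-1) := by
    have h := congrArg (fun z : ℤ => (z : ℝ)) (dr_sum_id' q)
    push_cast at h
    exact h
  have hK' : ∑ k ∈ Finset.Ico 1 q, (k:ℝ) = (q:ℝ) * ((q:ℝ)-1)/2 := by linarith
  have hc : ((q - 1 : ℕ) : ℝ) = (q : ℝ) - 1 := by
    have : (1:ℕ) ≤ q := hq; push_cast [this]; ring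
  rw [hT, hr, hK', nsmul_eq_mul, hc]
  field_simp
  ring

lemma dr_Trel (p q : ℕ) :
    (q:ℤ) * drS1 p q + drT p q = (p:ℤ) * ∑ k ∈ Finset.Ico 1 q, (k:ℤ)^2 := by
  rw [drS1, drT, Finset.mul_sum, Finset.mul_sum, ← Finset.sum_add_distrib]
  refine Finset.sum_congr rfl fun k hk => ?_
  linear_combination (-(k:ℤ)) * dr_cast_dm p q k

theorem dedekind_reciprocity (p q : ℕ) (hp : 0 < p) (hq : 0 < q)
    (hpq : Nat.Coprime p q) :
    dedekindSum p q + dedekindSum q p =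
      (1/12) * ((p : ℝ)/q + (q : ℝ)/p + 1/((p : ℝ)*q)) - 1/4 := by
  have hp0 : (p : ℝ) ≠ 0 := by exact_mod_cast hp.ne'
  have hq0 : (q : ℝ) ≠ 0 := by exact_mod_cast hq.ne'
  rw [dr_ded p q hp hq hpq, dr_ded q p hq hp hpq.symm]
  have hkey := congrArg (fun z : ℤ => (z : ℝ)) (dr_key p q hp hq hpq)
  have h1 := congrArg (fun z : ℤ => (z : ℝ)) (dr_Trel p q)
  have h2 := congrArg (fun z : ℤ => (z : ℝ)) (dr_Trel q p)
  have h3 := congrArg (fun z : ℤ => (z : ℝ)) (dr_sum_sq' q)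
  have h4 := congrArg (fun z : ℤ => (z : ℝ)) (dr_sum_sq' p)
  push_cast at hkey h1 h2 h3 h4
  have hSq : (∑ x ∈ Finset.Ico 1 q, (x:ℝ)^2) = (q:ℝ)*((q:ℝ)-1)*(2*(q:ℝ)-1)/6 := by
    linarith [h3]
  have hSp : (∑ x ∈ Finset.Ico 1 p, (x:ℝ)^2) = (p:ℝ)*((p:ℝ)-1)*(2*(p:ℝ)-1)/6 := by
    linarith [h4]
  have hT1 : ((drT p q : ℤ) : ℝ)
      = (p:ℝ)*((q:ℝ)*((q:ℝ)-1)*(2*(q:ℝ)-1)/6) - (q:ℝ)*((drS1 p q : ℤ) : ℝ) := by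
    linear_combination h1 + (p:ℝ) * hSq
  have hT2 : ((drT q p : ℤ) : ℝ)
      = (q:ℝ)*((p:ℝ)*((p:ℝ)-1)*(2*(p:ℝ)-1)/6) - (p:ℝ)*((drS1 q p : ℤ) : ℝ) := by
    linear_combination h2 + (q:ℝ) * hSp
  rw [hT1, hT2]
  field_simp
  linear_combination (-24 : ℝ) * hkey
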